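/- Let X be a type and Z ⊆ X a subset, and let n be a natural number. Then there is a Σn-equivariant bijection between (Fin n → X), with Σn acting by (σ • w) = w ∘ σ⁻¹, and the disjoint union over all pairs (i, j) with i + j = n of the induced Σn-sets Ind_{Σi×Σj}^{Σn}((Fin i → X \ Z) × (Fin j → Z)), where Σi × Σj acts blockwise on (Fin i → X \ Z) × (Fin j → Z). The bijection sends the class of (σ, (u, v)) in the (i, j)-summand to σ • (concatenation of u and v via Fin i ⊕ Fin j ≅ Fin n). -/

import Mathlib

open Equiv

namespace Stmt1

/-- The standard equivalence `Fin i ⊕ Fin j ≃ Fin n` for `i + j = n`. -/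
def finAdd {i j n : ℕ} (h : i + j = n) : Fin i ⊕ Fin j ≃ Fin n :=
  finSumFinEquiv.trans (finCongr h)

/-- The block embedding `Σi × Σj → Σn`: the first factor permutes the first `i`
elements, the second the last `j`. -/
def blockEmb {i j n : ℕ} (h : i + j = n) (p : Perm (Fin i) × Perm (Fin j)) :
    Perm (Fin n) :=
  (finAdd h).permCongr (Equiv.sumCongr p.1 p.2)

/-- The relation `(g, x) ~ (g·φ(h), h⁻¹ • x)` defining the induced `G`-set. -/
def IndRel {G H P : Type*} [Group G] [Group H] (φ : H → G) (act : H → P → P) :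
    G × P → G × P → Prop :=
  fun a b => ∃ h : H, b = (a.1 * φ h, act h⁻¹ a.2)

/-- The induced `G`-set `Ind_H^G P`, a quotient of `G × P`. -/
def Ind {G H P : Type*} [Group G] [Group H] (φ : H → G) (act : H → P → P) : Type _ :=
  Quot (IndRel φ act)

/-- Class of a pair `(g, x)` in the induced `G`-set. -/
def Ind.mk {G H P : Type*} [Group G] [Group H] (φ : H → G) (act : H → P → P)
    (a : G × P) : Ind φ act :=
  Quot.mk _ a

/-- The `G`-action on `Ind_H^G P`, by left multiplication on the first coordinate. -/
def Ind.smul {G H P : Type*} [Group G] [Group H] {φ : H → G} {act : H → P → P}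
    (g : G) : Ind φ act → Ind φ act :=
  Quot.map (fun a => (g * a.1, a.2))
    (by
      rintro ⟨g1, x1⟩ ⟨g2, x2⟩ ⟨h, heq⟩
      refine ⟨h, ?_⟩
      simp only [Prod.ext_iff] at heq ⊢
      exact ⟨by rw [heq.1, mul_assoc], heq.2⟩)

variable {X : Type} (Z : Set X)

/-- The action of `Σn` on `Fin n → X` by `(σ • w) = w ∘ σ⁻¹`. -/
def permSmul {X : Type} {n : ℕ} (σ : Perm (Fin n)) (w : Fin n → X) : Fin n → X :=
  fun k => w (σ⁻¹ k)

/-- `W`: the tuples for which the number of coordinates lying in `Z` is exactly `j`. -/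
def Wset (j n : ℕ) : Set (Fin n → X) :=
  {w | Nat.card {k : Fin n // w k ∈ Z} = j}

/-- `W` is invariant under the `Σn`-action, so the action restricts to `W`. -/
def WAct {j n : ℕ} (σ : Perm (Fin n)) (w : Wset Z j n) : Wset Z j n :=
  ⟨permSmul σ w.1, by
    have hw := w.2
    simp only [Wset, Set.mem_setOf_eq] at hw ⊢
    exact (Nat.card_congr (Equiv.subtypeEquiv (σ⁻¹ : Perm (Fin n)) fun a => Iff.rfl)).trans hw⟩

/-- The blockwise action of `Σi × Σj` on `(Fin i → X \ Z) × (Fin j → Z)`. -/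
def sourceAct {i j : ℕ} (p : Perm (Fin i) × Perm (Fin j))
    (x : (Fin i → ↥(Zᶜ)) × (Fin j → ↥Z)) : (Fin i → ↥(Zᶜ)) × (Fin j → ↥Z) :=
  (fun a => x.1 (p.1⁻¹ a), fun b => x.2 (p.2⁻¹ b))

/-- The concatenation of a tuple in `X \ Z` and a tuple in `Z`, via `Fin i ⊕ Fin j ≃ Fin n`. -/
def concat {i j n : ℕ} (h : i + j = n) (x : (Fin i → ↥(Zᶜ)) × (Fin j → ↥Z)) :
    Fin n → X :=
  fun k => Sum.elim (fun a => (x.1 a : X)) (fun b => (x.2 b : X)) ((finAdd h).symm k)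

lemma concat_mem {i j n : ℕ} (h : i + j = n) (x : (Fin i → ↥(Zᶜ)) × (Fin j → ↥Z)) :
    concat Z h x ∈ Wset Z j n := by
  simp only [Wset, Set.mem_setOf_eq]
  have e1 : {k : Fin n // concat Z h x k ∈ Z} ≃
      {s : Fin i ⊕ Fin j // Sum.elim (fun a => (x.1 a : X)) (fun b => (x.2 b : X)) s ∈ Z} :=
    Equiv.subtypeEquiv (finAdd h).symm fun k => Iff.rfl
  have e2 : {s : Fin i ⊕ Fin j //
      Sum.elim (fun a => (x.1 a : X)) (fun b => (x.2 b : X)) s ∈ Z} ≃ Fin j :=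
    { toFun := fun s => match s with
        | ⟨.inl a, ha⟩ => absurd ha (x.1 a).2
        | ⟨.inr b, _⟩ => b
      invFun := fun b => ⟨.inr b, (x.2 b).2⟩
      left_inv := by rintro ⟨(a | b), hs⟩
                     · exact absurd hs (x.1 a).2
                     · rfl
      right_inv := fun b => rfl }
  rw [Nat.card_congr (e1.trans e2), Nat.card_eq_fintype_card, Fintype.card_fin]

/-- The concatenation map `η` into `W`. -/
def η {i j n : ℕ} (h : i + j = n) (x : (Fin i → ↥(Zᶜ)) × (Fin j → ↥Z)) : Wset Z j n :=
  ⟨concat Z h x, concat_mem Z h x⟩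

lemma permSmul_mul {X : Type} {n : ℕ} (σ τ : Perm (Fin n)) (w : Fin n → X) :
    permSmul (σ * τ) w = permSmul σ (permSmul τ w) := by
  funext k
  simp [permSmul, mul_inv_rev]

lemma blockEmb_apply {i j n : ℕ} (h : i + j = n) (p : Perm (Fin i) × Perm (Fin j))
    (k : Fin n) :
    blockEmb h p k = finAdd h (sumCongr p.1 p.2 ((finAdd h).symm k)) := rfl

lemma blockEmb_inv_apply {i j n : ℕ} (h : i + j = n) (p : Perm (Fin i) × Perm (Fin j))
    (k : Fin n) :
    (blockEmb h p)⁻¹ k = finAdd h ((sumCongr p.1 p.2).symm ((finAdd h).symm k)) := rfl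

lemma blockEmb_inv {i j n : ℕ} (h : i + j = n) (p : Perm (Fin i) × Perm (Fin j)) :
    blockEmb h p⁻¹ = (blockEmb h p)⁻¹ := by
  ext k
  rw [blockEmb_apply, blockEmb_inv_apply]
  congr 1

lemma concat_sourceAct {i j n : ℕ} (h : i + j = n) (p : Perm (Fin i) × Perm (Fin j))
    (x : (Fin i → ↥(Zᶜ)) × (Fin j → ↥Z)) :
    concat Z h (sourceAct Z p x) = permSmul (blockEmb h p) (concat Z h x) := by
  funext k
  simp only [concat, sourceAct, permSmul]
  rw [blockEmb_inv_apply, Equiv.symm_apply_apply]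
  cases (finAdd h).symm k with
  | inl a => rfl
  | inr b => rfl

lemma sourceAct_sourceAct {i j : ℕ} (p q : Perm (Fin i) × Perm (Fin j))
    (x : (Fin i → ↥(Zᶜ)) × (Fin j → ↥Z)) :
    sourceAct Z p (sourceAct Z q x) = sourceAct Z (p * q) x := by
  simp [sourceAct, mul_inv_rev]

lemma sourceAct_one {i j : ℕ} (x : (Fin i → ↥(Zᶜ)) × (Fin j → ↥Z)) :
    sourceAct Z (1 : Perm (Fin i) × Perm (Fin j)) x = x := by
  simp [sourceAct]

lemma concat_finAdd {i j n : ℕ} (h : i + j = n) (x : (Fin i → ↥(Zᶜ)) × (Fin j → ↥Z))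
    (s : Fin i ⊕ Fin j) :
    concat Z h x (finAdd h s) =
      Sum.elim (fun a => (x.1 a : X)) (fun b => (x.2 b : X)) s := by
  simp [concat]

lemma permSmul_concat_mem {i j n : ℕ} (h : i + j = n) (σ : Perm (Fin n))
    (x : (Fin i → ↥(Zᶜ)) × (Fin j → ↥Z)) :
    permSmul σ (concat Z h x) ∈ Wset Z j n :=
  (WAct Z σ ⟨_, concat_mem Z h x⟩).2

/-- Restriction to the left summand of a sum permutation preserving the left summand. -/
noncomputable def restrictLeft {α β : Type*} (ρ : Perm (α ⊕ β))
    (hl : ∀ a, ∃ a', ρ (Sum.inl a) = Sum.inl a')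
    (hl' : ∀ a, ∃ a', ρ⁻¹ (Sum.inl a) = Sum.inl a') : Perm α where
  toFun a := (hl a).choose
  invFun a := (hl' a).choose
  left_inv a := by
    apply Sum.inl_injective
    rw [← (hl' (hl a).choose).choose_spec, ← (hl a).choose_spec, Perm.inv_def, Equiv.symm_apply_apply]
  right_inv a := by
    apply Sum.inl_injective
    rw [← (hl (hl' a).choose).choose_spec, ← (hl' a).choose_spec, Perm.inv_def, Equiv.apply_symm_apply]

/-- Restriction to the right summand of a sum permutation preserving the right summand. -/
noncomputable def restrictRight {α β : Type*} (ρ : Perm (α ⊕ β))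
    (hr : ∀ b, ∃ b', ρ (Sum.inr b) = Sum.inr b')
    (hr' : ∀ b, ∃ b', ρ⁻¹ (Sum.inr b) = Sum.inr b') : Perm β where
  toFun b := (hr b).choose
  invFun b := (hr' b).choose
  left_inv b := by
    apply Sum.inr_injective
    rw [← (hr' (hr b).choose).choose_spec, ← (hr b).choose_spec, Perm.inv_def, Equiv.symm_apply_apply]
  right_inv b := by
    apply Sum.inr_injective
    rw [← (hr (hr' b).choose).choose_spec, ← (hr' b).choose_spec, Perm.inv_def, Equiv.apply_symm_apply]

/-- The `Σn`-set `Fin n → X` decomposes equivariantly as the disjoint union, over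
pairs `(i, j)` with `i + j = n`, of the induced `Σn`-sets
`Ind_{Σi×Σj}^{Σn}((Fin i → X \\ Z) × (Fin j → Z))`; the bijection sends the class of
`(σ, (u, v))` in the `(i, j)`-summand to `σ • (concatenation of u and v)`. -/
theorem statement1 (n : ℕ) :
    ∃ e : ((p : {p : ℕ × ℕ // p.1 + p.2 = n}) ×
        Ind (blockEmb p.2) (sourceAct (i := p.1.1) (j := p.1.2) Z)) ≃ (Fin n → X),
      (∀ (σ : Perm (Fin n)) (x), e ⟨x.1, Ind.smul σ x.2⟩ = permSmul σ (e x)) ∧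
      (∀ (p : {p : ℕ × ℕ // p.1 + p.2 = n}) (σ : Perm (Fin n))
          (u : Fin p.1.1 → ↥(Zᶜ)) (v : Fin p.1.2 → ↥Z),
        e ⟨p, Ind.mk (blockEmb p.2) (sourceAct Z) (σ, (u, v))⟩ =
          permSmul σ (concat Z p.2 (u, v))) := by
  classical
  -- well-definedness of the forward map on each summand
  have wd : ∀ (p : {p : ℕ × ℕ // p.1 + p.2 = n})
      (a b : Perm (Fin n) × ((Fin p.1.1 → ↥(Zᶜ)) × (Fin p.1.2 → ↥Z))),
      IndRel (blockEmb p.2) (sourceAct Z) a b →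
      permSmul a.1 (concat Z p.2 a.2) = permSmul b.1 (concat Z p.2 b.2) := by
    rintro ⟨⟨i, j⟩, h⟩ ⟨σ, x⟩ b ⟨q, rfl⟩
    simp only
    rw [concat_sourceAct, blockEmb_inv, ← permSmul_mul]
    simp
  -- the forward map
  set F : ((p : {p : ℕ × ℕ // p.1 + p.2 = n}) ×
      Ind (blockEmb p.2) (sourceAct (i := p.1.1) (j := p.1.2) Z)) → (Fin n → X) :=
    fun a => Quot.lift (fun b => permSmul b.1 (concat Z a.1.2 b.2)) (wd a.1) a.2 with hF
  have hinj : Function.Injective F := by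
    rintro ⟨⟨⟨i, j⟩, h⟩, a⟩ ⟨⟨⟨i', j'⟩, h'⟩, b⟩ hab
    induction a using Quot.ind with | _ a => ?_
    induction b using Quot.ind with | _ b => ?_
    obtain ⟨σ, x⟩ := a
    obtain ⟨τ, y⟩ := b
    have hab : permSmul σ (concat Z h x) = permSmul τ (concat Z h' y) := hab
    -- the two index pairs agree
    have m1 := permSmul_concat_mem Z h σ x
    have m2 := permSmul_concat_mem Z h' τ y
    rw [hab] at m1
    simp only [Wset, Set.mem_setOf_eq] at m1 m2
    have hjj : j = j' := m1.symm.trans m2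
    subst hjj
    have hii : i = i' := by omega
    subst hii
    have hhh : h = h' := rfl
    subst hhh
    -- now work within a single summand
    set ρ : Perm (Fin n) := σ⁻¹ * τ with hρ
    have hkey : ∀ k, concat Z h y k = concat Z h x (ρ k) := by
      intro k
      have := congrFun hab (τ k)
      simp only [permSmul, show τ⁻¹ (τ k) = k from τ.symm_apply_apply k] at this
      simpa [hρ, Perm.mul_apply] using this.symm
    have hkey' : ∀ k, concat Z h x k = concat Z h y (ρ⁻¹ k) := by
      intro k
      have := congrFun hab (σ k)
      simp only [permSmul, show σ⁻¹ (σ k) = k from σ.symm_apply_apply k] at this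
      simpa [hρ, mul_inv_rev, Perm.mul_apply] using this
    set ρ' : Perm (Fin i ⊕ Fin j) :=
      (finAdd h).trans (ρ.trans (finAdd h).symm) with hρ'
    have hρ'app : ∀ s, (finAdd h) (ρ' s) = ρ (finAdd h s) := by
      intro s; simp [hρ']
    have hρ'inv : ∀ s, (finAdd h) (ρ'⁻¹ s) = ρ⁻¹ (finAdd h s) := by
      intro s
      show (finAdd h) (ρ'.symm s) = ρ⁻¹ (finAdd h s)
      simp [hρ']
    have hl : ∀ a, ∃ a', ρ' (Sum.inl a) = Sum.inl a' := by
      intro a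
      rcases hs : ρ' (Sum.inl a) with a' | b'
      · exact ⟨a', rfl⟩
      · exfalso
        have hv := hkey (finAdd h (Sum.inl a))
        rw [concat_finAdd, ← hρ'app, hs, concat_finAdd] at hv
        simp only [Sum.elim_inl, Sum.elim_inr] at hv
        have hm := (x.2 b').2
        rw [← hv] at hm
        exact (y.1 a).2 hm
    have hl' : ∀ a, ∃ a', ρ'⁻¹ (Sum.inl a) = Sum.inl a' := by
      intro a
      rcases hs : ρ'⁻¹ (Sum.inl a) with a' | b'
      · exact ⟨a', rfl⟩
      · exfalso
        have hv := hkey' (finAdd h (Sum.inl a))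
        rw [concat_finAdd, ← hρ'inv, hs, concat_finAdd] at hv
        simp only [Sum.elim_inl, Sum.elim_inr] at hv
        have hm := (y.2 b').2
        rw [← hv] at hm
        exact (x.1 a).2 hm
    have hr : ∀ b, ∃ b', ρ' (Sum.inr b) = Sum.inr b' := by
      intro b
      rcases hs : ρ' (Sum.inr b) with a' | b'
      · exfalso
        have hv := hkey (finAdd h (Sum.inr b))
        rw [concat_finAdd, ← hρ'app, hs, concat_finAdd] at hv
        simp only [Sum.elim_inl, Sum.elim_inr] at hv
        have hm := (y.2 b).2
        rw [hv] at hm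
        exact (x.1 a').2 hm
      · exact ⟨b', rfl⟩
    have hr' : ∀ b, ∃ b', ρ'⁻¹ (Sum.inr b) = Sum.inr b' := by
      intro b
      rcases hs : ρ'⁻¹ (Sum.inr b) with a' | b'
      · exfalso
        have hv := hkey' (finAdd h (Sum.inr b))
        rw [concat_finAdd, ← hρ'inv, hs, concat_finAdd] at hv
        simp only [Sum.elim_inl, Sum.elim_inr] at hv
        have hm := (x.2 b).2
        rw [hv] at hm
        exact (y.1 a').2 hm
      · exact ⟨b', rfl⟩
    set P : Perm (Fin i) := restrictLeft ρ' hl hl' with hP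
    set Q : Perm (Fin j) := restrictRight ρ' hr hr' with hQ
    have hρ'eq : ∀ s, ρ' s = sumCongr P Q s := by
      rintro (a | b)
      · simp only [sumCongr_apply, Sum.map_inl]
        exact (hl a).choose_spec
      · simp only [sumCongr_apply, Sum.map_inr]
        exact (hr b).choose_spec
    have hblock : blockEmb h (P, Q) = ρ := by
      ext k
      have : blockEmb h (P, Q) k = finAdd h (sumCongr P Q ((finAdd h).symm k)) :=
        blockEmb_apply h (P, Q) k
      rw [this, ← hρ'eq, hρ'app, Equiv.apply_symm_apply]
    have hrel : IndRel (blockEmb h) (sourceAct Z) (σ, x) (τ, y) := by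
      unfold IndRel
      refine ⟨(P, Q), ?_⟩
      refine Prod.ext ?_ ?_
      · show τ = σ * blockEmb h (P, Q)
        rw [hblock, hρ]
        group
      · show y = sourceAct Z (P, Q)⁻¹ x
        have hy1 : ∀ a, y.1 a = x.1 (P a) := by
          intro a
          apply Subtype.ext
          have hv := hkey (finAdd h (Sum.inl a))
          rw [concat_finAdd, ← hρ'app, (hl a).choose_spec, concat_finAdd] at hv
          exact hv
        have hy2 : ∀ b, y.2 b = x.2 (Q b) := by
          intro b
          apply Subtype.ext
          have hv := hkey (finAdd h (Sum.inr b))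
          rw [concat_finAdd, ← hρ'app, (hr b).choose_spec, concat_finAdd] at hv
          exact hv
        refine Prod.ext (funext fun a => ?_) (funext fun b => ?_)
        · rw [hy1 a]
          show x.1 (P a) = x.1 ((P⁻¹)⁻¹ a)
          rw [inv_inv]
        · rw [hy2 b]
          show x.2 (Q b) = x.2 ((Q⁻¹)⁻¹ b)
          rw [inv_inv]
    have hq : (Quot.mk (IndRel (blockEmb h) (sourceAct Z)) (σ, x) :
        Ind (blockEmb h) (sourceAct Z)) = Quot.mk _ (τ, y) := Quot.sound hrel
    exact congrArg (fun z : Ind (blockEmb h) (sourceAct Z) =>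
      (⟨⟨⟨i, j⟩, h⟩, z⟩ : (p : {p : ℕ × ℕ // p.1 + p.2 = n}) ×
        Ind (blockEmb p.2) (sourceAct (i := p.1.1) (j := p.1.2) Z))) hq
  have hsurj : Function.Surjective F := by
    intro w
    set j := Nat.card {k : Fin n // w k ∈ Z} with hjdef
    have hcard : Fintype.card {k : Fin n // w k ∈ Z} = j := Nat.card_eq_fintype_card.symm
    have hjn : j ≤ n := by
      have h1 := Fintype.card_subtype_le (fun k : Fin n => w k ∈ Z)
      rw [Fintype.card_fin, hcard] at h1
      exact h1
    set i := n - j with hidef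
    have h : i + j = n := Nat.sub_add_cancel hjn
    have hcardc : Fintype.card {k : Fin n // ¬ w k ∈ Z} = i := by
      rw [Fintype.card_subtype_compl, hcard, Fintype.card_fin]
    set eI : Fin i ≃ {k : Fin n // ¬ w k ∈ Z} := (Fintype.equivFinOfCardEq hcardc).symm
    set eJ : Fin j ≃ {k : Fin n // w k ∈ Z} := (Fintype.equivFinOfCardEq hcard).symm
    set E : Fin i ⊕ Fin j ≃ Fin n :=
      (sumCongr eI eJ).trans ((Equiv.sumComm _ _).trans
        (Equiv.sumCompl (fun k => w k ∈ Z))) with hE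
    set σ : Perm (Fin n) := (finAdd h).symm.trans E with hσ
    refine ⟨⟨⟨⟨i, j⟩, h⟩, Quot.mk _ (σ, (fun a => ⟨w (eI a), (eI a).2⟩,
      fun b => ⟨w (eJ b), (eJ b).2⟩))⟩, ?_⟩
    show permSmul σ (concat Z h _) = w
    funext k
    show concat Z h _ (σ⁻¹ k) = w k
    have hσinv : σ⁻¹ k = finAdd h (E.symm k) := rfl
    rw [hσinv, concat_finAdd]
    rcases hs : E.symm k with a | b
    · have hk : k = E (Sum.inl a) := by rw [← hs, Equiv.apply_symm_apply]
      have hEa : E (Sum.inl a) = (eI a : Fin n) := by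
        simp [hE]
      rw [hk, hEa]
      simp
    · have hk : k = E (Sum.inr b) := by rw [← hs, Equiv.apply_symm_apply]
      have hEb : E (Sum.inr b) = (eJ b : Fin n) := by
        simp [hE]
      rw [hk, hEb]
      simp
  refine ⟨Equiv.ofBijective F ⟨hinj, hsurj⟩, ?_, ?_⟩
  · rintro σ ⟨p, a⟩
    induction a using Quot.ind with | _ a => ?_
    exact permSmul_mul σ a.1 (concat Z p.2 a.2)
  · intro p σ u v
    rfl

end Stmt1
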